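/- Let p be a nonzero real number, and let A, Ω, b₁, μ, ν be real numbers with Ω > 0, b₁ > 0, μ² = p²·A·Ω^p·b₁^p / (2(p+1)(p+2)) (in particular (p+1)(p+2) ≠ 0 and p²·A·Ω^p·b₁^p / (2(p+1)(p+2)) ≥ 0), and ν = −4μ³/p². Then the function u(x, t) = Ω·b₁ / (cosh(μx + νt))^{2/p}, with real-number powers, satisfies the generalized Korteweg–de Vries equation u_t + A·u^p·u_x + u_{xxx} = 0 for all (x, t) ∈ ℝ², where u^p is a real power (u > 0). -/

import Mathlib

open Real

lemma coshpow_hasDerivAt (c s : ℝ) :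
    HasDerivAt (fun z => Real.cosh z ^ c) (c * Real.cosh s ^ (c - 1) * Real.sinh s) s := by
  have h := (Real.hasDerivAt_rpow_const (p := c)
      (Or.inl (Real.cosh_pos (x := s)).ne')).comp s (Real.hasDerivAt_cosh s)
  exact h

lemma coshpow_d2 (c s : ℝ) :
    HasDerivAt (fun z => c * Real.cosh z ^ (c - 1) * Real.sinh z)
      (c ^ 2 * Real.cosh s ^ c - c * (c - 1) * Real.cosh s ^ (c - 2)) s := by
  have h1 := ((coshpow_hasDerivAt (c - 1) s).const_mul c).mul (Real.hasDerivAt_sinh s)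
  have h2 : (fun z => c * (Real.cosh z ^ (c - 1)) * Real.sinh z)
      = fun z => c * Real.cosh z ^ (c - 1) * Real.sinh z := rfl
  convert h1 using 1
  · rfl
  · rfl
  · rfl
  have hpos := Real.cosh_pos (x := s)
  have e1 : Real.cosh s ^ (c - 2) * Real.cosh s ^ (2:ℝ) = Real.cosh s ^ c := by
    rw [← Real.rpow_add hpos]; ring_nf
  have e2 : Real.cosh s ^ (c - 1) * Real.cosh s ^ (1:ℝ) = Real.cosh s ^ c := by
    rw [← Real.rpow_add hpos]; ring_nf
  have hsq : Real.sinh s ^ 2 = Real.cosh s ^ 2 - 1 := Real.sinh_sq s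
  have r2 : Real.cosh s ^ (2:ℝ) = Real.cosh s ^ (2:ℕ) := by
    rw [← Real.rpow_natCast]; norm_num
  have r1 : Real.cosh s ^ (1:ℝ) = Real.cosh s := Real.rpow_one _
  rw [r2] at e1
  rw [r1] at e2
  have h3 : c - 1 - 1 = c - 2 := by ring
  rw [h3]
  linear_combination (-(c*(c-1)*Real.cosh s^(c-2)))*hsq + (-(c*(c-1)))*e1 + (-c)*e2

lemma coshpow_d3 (c s : ℝ) :
    HasDerivAt (fun z => c ^ 2 * Real.cosh z ^ c - c * (c - 1) * Real.cosh z ^ (c - 2))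
      (c ^ 3 * Real.cosh s ^ (c - 1) * Real.sinh s
        - c * (c - 1) * (c - 2) * Real.cosh s ^ (c - 3) * Real.sinh s) s := by
  have h := (((coshpow_hasDerivAt c s).const_mul (c ^ 2)).sub
    ((coshpow_hasDerivAt (c - 2) s).const_mul (c * (c - 1))))
  convert h using 1
  · rfl
  · rfl
  · rfl
  have : c - 2 - 1 = c - 3 := by ring
  rw [this]; ring

theorem stmt12 (p A Ω b₁ μ ν : ℝ) (hp : p ≠ 0) (hΩ : 0 < Ω) (hb : 0 < b₁)
    (hne : (p + 1) * (p + 2) ≠ 0)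
    (hnonneg : 0 ≤ p ^ 2 * A * Ω ^ p * b₁ ^ p / (2 * (p + 1) * (p + 2)))
    (hμ : μ ^ 2 = p ^ 2 * A * Ω ^ p * b₁ ^ p / (2 * (p + 1) * (p + 2)))
    (hν : ν = -4 * μ ^ 3 / p ^ 2)
    (u : ℝ → ℝ → ℝ)
    (hu : ∀ x t : ℝ, u x t = Ω * b₁ / (Real.cosh (μ * x + ν * t)) ^ (2 / p)) :
    ∀ x t : ℝ,
      deriv (fun τ => u x τ) t + A * (u x t) ^ p * deriv (fun y => u y t) x
        + iteratedDeriv 3 (fun y => u y t) x = 0 := by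
  intro x t
  set b : ℝ := -(2 / p) with hbdef
  set C : ℝ := Ω * b₁ with hCdef
  have hCpos : 0 < C := mul_pos hΩ hb
  have hu' : ∀ x t : ℝ, u x t = C * Real.cosh (μ * x + ν * t) ^ b := by
    intro x t
    rw [hu, hbdef, Real.rpow_neg (Real.cosh_pos _).le, div_eq_mul_inv]
  set s : ℝ := μ * x + ν * t with hsdef
  -- time derivative
  have Ht : deriv (fun τ => u x τ) t = C * (b * Real.cosh s ^ (b - 1) * Real.sinh s) * ν := by
    have hft : (fun τ => u x τ) = fun τ => C * Real.cosh (μ * x + ν * τ) ^ b :=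
      funext fun τ => hu' x τ
    rw [hft]
    have hin : HasDerivAt (fun τ : ℝ => μ * x + ν * τ) ν t := by
      simpa using ((hasDerivAt_id t).const_mul ν).const_add (μ * x)
    exact (((coshpow_hasDerivAt b s).const_mul C).comp t hin).deriv
  -- first spatial derivative (as function)
  have D1 : deriv (fun y => u y t)
      = fun y => C * (b * Real.cosh (μ * y + ν * t) ^ (b - 1) * Real.sinh (μ * y + ν * t)) * μ := by
    funext y
    have hf : (fun y => u y t) = fun y => C * Real.cosh (μ * y + ν * t) ^ b :=
      funext fun y => hu' y t
    rw [hf]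
    have hin : HasDerivAt (fun y : ℝ => μ * y + ν * t) μ y := by
      simpa using ((hasDerivAt_id y).const_mul μ).add_const (ν * t)
    exact (((coshpow_hasDerivAt b (μ * y + ν * t)).const_mul C).comp y hin).deriv
  have D2 : deriv (deriv (fun y => u y t))
      = fun y => C * ((b ^ 2 * Real.cosh (μ * y + ν * t) ^ b
          - b * (b - 1) * Real.cosh (μ * y + ν * t) ^ (b - 2)) * μ) * μ := by
    rw [D1]
    funext y
    have hin : HasDerivAt (fun y : ℝ => μ * y + ν * t) μ y := by
      simpa using ((hasDerivAt_id y).const_mul μ).add_const (ν * t)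
    exact ((((coshpow_d2 b (μ * y + ν * t)).comp y hin).const_mul C).mul_const μ).deriv
  have D3 : deriv (deriv (deriv (fun y => u y t))) x
      = C * (((b ^ 3 * Real.cosh s ^ (b - 1) * Real.sinh s
          - b * (b - 1) * (b - 2) * Real.cosh s ^ (b - 3) * Real.sinh s) * μ) * μ) * μ := by
    rw [D2]
    have hin : HasDerivAt (fun y : ℝ => μ * y + ν * t) μ x := by
      simpa using ((hasDerivAt_id x).const_mul μ).add_const (ν * t)
    exact (((((coshpow_d3 b s).comp x hin).mul_const μ).const_mul C).mul_const μ).deriv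
  have H3 : iteratedDeriv 3 (fun y => u y t) x
      = deriv (deriv (deriv (fun y => u y t))) x := by
    rw [show (3:ℕ) = 2 + 1 from rfl, iteratedDeriv_succ,
      show (2:ℕ) = 1 + 1 from rfl, iteratedDeriv_succ, iteratedDeriv_one]
  -- power of u
  have hup : u x t ^ p = Ω ^ p * b₁ ^ p * Real.cosh s ^ (-2 : ℝ) := by
    rw [hu' x t, hCdef]
    rw [Real.mul_rpow (mul_pos hΩ hb).le (Real.rpow_pos_of_pos (Real.cosh_pos _) b).le,
      Real.mul_rpow hΩ.le hb.le, ← Real.rpow_mul (Real.cosh_pos _).le,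
      show b * p = (-2 : ℝ) by rw [hbdef]; field_simp]
  have hD : (2:ℝ) * (p + 1) * (p + 2) ≠ 0 := by
    rw [mul_assoc]; exact mul_ne_zero two_ne_zero hne
  have hμ2 : μ ^ 2 * (2 * (p + 1) * (p + 2)) = p ^ 2 * A * Ω ^ p * b₁ ^ p := by
    rw [hμ, div_mul_cancel₀ _ hD]
  have key1 : b * ν + b ^ 3 * μ ^ 3 = 0 := by
    rw [hbdef, hν]; field_simp; ring
  have key2 : A * (Ω ^ p * b₁ ^ p) * μ - μ ^ 3 * ((b - 1) * (b - 2)) = 0 := by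
    rw [hbdef]; field_simp; linear_combination (-μ) * hμ2
  have hsplit : Real.cosh s ^ (b - 3) = Real.cosh s ^ (b - 1) * Real.cosh s ^ (-2 : ℝ) := by
    rw [← Real.rpow_add (Real.cosh_pos _)]; ring_nf
  rw [Ht, H3, D3, hup, D1, hsplit]
  linear_combination (C * Real.cosh s ^ (b - 1) * Real.sinh s) * key1
    + (C * b * Real.cosh s ^ (b - 1) * Real.cosh s ^ (-2 : ℝ) * Real.sinh s) * key2
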